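/- Let (S, C) be an instance with S = (U_S, V_S), C = (U_C, V_C), and suppose the subgraph induced by S has at most k non-edges, i.e., |Ē_S| ≤ k. For w ∈ U_C let d̄_S(w) = |{v ∈ V_S : (w, v) ∉ E}| and define d̄_S on V_C symmetrically; let σ(i) be the sum of the i smallest values of d̄_S over U_C and τ(j) the sum of the j smallest values of d̄_S over V_C. For each i ∈ {0, …, |U_C|} with σ(i) ≤ k − |Ē_S|, let j_i be the largest j ∈ {0, …, |V_C|} with σ(i) + τ(j) ≤ k − |Ē_S|. Then every k-defective biclique D = (U_D, V_D, E_D) with U_S ⊆ U_D ⊆ U_S ∪ U_C and V_S ⊆ V_D ⊆ V_S ∪ V_C satisfies |E_D| ≤ max over such i of [(|U_S| + i)·(|V_S| + j_i) − |Ē_S| − σ(i) − τ(j_i)]. -/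

import Mathlib

/-- The number of non-neighbors of `w ∈ U` in `V_S` (with respect to the edge set `E`). -/
def dbarU {α β : Type*} [DecidableEq α] [DecidableEq β]
    (E : Finset (α × β)) (VS : Finset β) (w : α) : ℕ :=
  (VS.filter (fun v => (w, v) ∉ E)).card

/-- The number of non-neighbors of `w ∈ V` in `U_S` (with respect to the edge set `E`). -/
def dbarV {α β : Type*} [DecidableEq α] [DecidableEq β]
    (E : Finset (α × β)) (US : Finset α) (w : β) : ℕ :=
  (US.filter (fun u => (u, w) ∉ E)).card

/-- The sum of the `i` smallest values (with multiplicity) of `f` over the finset `s`. -/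
def smallSum {γ : Type*} (s : Finset γ) (f : γ → ℕ) (i : ℕ) : ℕ :=
  (((s.val.map f).sort (· ≤ ·)).take i).sum


theorem take_sum_le_aux : ∀ {M L : List ℕ}, List.Sublist M L → L.Pairwise (· ≤ ·) →
    (L.take M.length).sum ≤ M.sum := by
  intro M L h
  induction h with
  | slnil => simp
  | cons a h ih =>
    rename_i M L
    intro hs
    rcases M with _ | ⟨b, M'⟩
    · simp
    · have hlen : M'.length + 1 ≤ L.length := h.length_le
      have h1 : ((a :: L).take (M'.length + 1)).sum
          = a + (L.take M'.length).sum := by simp [List.take_succ_cons]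
      have hlt : M'.length < L.length := by omega
      have h2 : (L.take (M'.length + 1)).sum
          = (L.take M'.length).sum + L[M'.length] := by
        exact List.sum_take_succ L M'.length hlt
      have ha : a ≤ L[M'.length] :=
        (List.pairwise_cons.mp hs).1 _ (List.getElem_mem _)
      have := ih (List.pairwise_cons.mp hs).2
      simp only [List.length_cons] at *
      omega
  | cons_cons a h ih =>
    rename_i M L
    intro hs
    have := ih (List.pairwise_cons.mp hs).2
    simp only [List.length_cons, List.take_succ_cons, List.sum_cons]
    omega

/-- The sum of the `|t|` smallest values over `s` is at most the sum over any subset `t`. -/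
theorem smallSum_le_sum {γ : Type*} (s t : Finset γ) (f : γ → ℕ) (h : t ⊆ s) :
    smallSum s f t.card ≤ ∑ x ∈ t, f x := by
  have hle : t.val.map f ≤ s.val.map f := Multiset.map_le_map (Finset.val_le_iff.mpr h)
  set M := (t.val.map f).sort (· ≤ ·) with hM
  set L := (s.val.map f).sort (· ≤ ·) with hL
  have hsub : List.Sublist M L := by
    apply List.sublist_of_subperm_of_pairwise _ (Multiset.pairwise_sort _ _)
      (Multiset.pairwise_sort _ _)
    rw [← Multiset.coe_le, Multiset.sort_eq, Multiset.sort_eq]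
    exact hle
  have hlen : M.length = t.card := by
    rw [hM, Multiset.length_sort, Multiset.card_map]; rfl
  have hsum : M.sum = ∑ x ∈ t, f x := by
    have h1 : ((M : Multiset ℕ)).sum = (t.val.map f).sum := by rw [hM, Multiset.sort_eq]
    rw [Multiset.sum_coe] at h1
    exact h1
  calc smallSum s f t.card = (L.take M.length).sum := by rw [smallSum, hlen]
    _ ≤ M.sum := take_sum_le_aux hsub (Multiset.pairwise_sort _ _)
    _ = _ := hsum

/-- Increasing the argument of `smallSum` by `m` increases it by at most `m * B`
when all values are bounded by `B`. -/
theorem smallSum_le_add {γ : Type*} (s : Finset γ) (f : γ → ℕ) (B a b : ℕ)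
    (hab : a ≤ b) (hB : ∀ x ∈ s, f x ≤ B) :
    smallSum s f b ≤ smallSum s f a + (b - a) * B := by
  set L := (s.val.map f).sort (· ≤ ·) with hL
  have hsplit : L.take b = L.take a ++ (L.drop a).take (b - a) := by
    rw [← List.take_add]
    congr 1
    omega
  have hbound : ((L.drop a).take (b - a)).sum ≤ (b - a) * B := by
    calc ((L.drop a).take (b - a)).sum
        ≤ ((L.drop a).take (b - a)).length * B := by
          apply List.sum_le_card_nsmul
          intro x hx
          have hxL : x ∈ L := List.mem_of_mem_drop (List.mem_of_mem_take hx)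
          have : x ∈ s.val.map f := by rwa [hL, Multiset.mem_sort] at hxL
          obtain ⟨y, hy, rfl⟩ := Multiset.mem_map.mp this
          exact hB y hy
      _ ≤ (b - a) * B := by
          apply Nat.mul_le_mul_right
          simp
  have : (L.take b).sum = (L.take a).sum + ((L.drop a).take (b - a)).sum := by
    rw [hsplit, List.sum_append]
  simp only [smallSum, ← hL]
  omega

/-- Cardinality of the non-edges in a product, summed fiberwise over the first coordinate. -/
theorem card_prod_sdiff_fst {α β : Type*} [DecidableEq α] [DecidableEq β]
    (E : Finset (α × β)) (A : Finset α) (B : Finset β) :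
    ((A ×ˢ B) \ E).card = ∑ w ∈ A, (B.filter (fun v => (w, v) ∉ E)).card := by
  have : (A ×ˢ B) \ E
      = A.biUnion (fun w => (B.filter (fun v => (w, v) ∉ E)).map
          ⟨Prod.mk w, Prod.mk_right_injective w⟩) := by
    ext ⟨u, v⟩
    simp only [Finset.mem_sdiff, Finset.mem_product, Finset.mem_biUnion, Finset.mem_map,
      Finset.mem_filter, Function.Embedding.coeFn_mk, Prod.mk.injEq]
    constructor
    · rintro ⟨⟨hu, hv⟩, he⟩
      exact ⟨u, hu, v, ⟨hv, he⟩, rfl, rfl⟩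
    · rintro ⟨w, hw, x, ⟨hx, he⟩, rfl, rfl⟩
      exact ⟨⟨hw, hx⟩, he⟩
  rw [this, Finset.card_biUnion]
  · simp
  · intro x hx y hy hxy
    simp only [Finset.disjoint_left, Finset.mem_map, Function.Embedding.coeFn_mk]
    rintro p ⟨a, ha, rfl⟩ ⟨b, hb, heq⟩
    exact hxy (congrArg Prod.fst heq).symm

/-- Cardinality of the non-edges in a product, summed fiberwise over the second coordinate. -/
theorem card_prod_sdiff_snd {α β : Type*} [DecidableEq α] [DecidableEq β]
    (E : Finset (α × β)) (A : Finset α) (B : Finset β) :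
    ((A ×ˢ B) \ E).card = ∑ v ∈ B, (A.filter (fun u => (u, v) ∉ E)).card := by
  have : (A ×ˢ B) \ E
      = B.biUnion (fun v => (A.filter (fun u => (u, v) ∉ E)).map
          ⟨fun u => (u, v), fun a b h => (Prod.mk.injEq _ _ _ _ ▸ h).1⟩) := by
    ext ⟨u, v⟩
    simp only [Finset.mem_sdiff, Finset.mem_product, Finset.mem_biUnion, Finset.mem_map,
      Finset.mem_filter, Function.Embedding.coeFn_mk, Prod.mk.injEq]
    constructor
    · rintro ⟨⟨hu, hv⟩, he⟩
      exact ⟨v, hv, u, ⟨hu, he⟩, rfl⟩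
    · rintro ⟨w, hw, x, ⟨hx, he⟩, h⟩
      obtain ⟨rfl, rfl⟩ := Prod.mk.injEq _ _ _ _ ▸ h
      exact ⟨⟨hx, hw⟩, he⟩
  rw [this, Finset.card_biUnion]
  · simp
  · intro x hx y hy hxy
    simp only [Finset.disjoint_left, Finset.mem_map, Function.Embedding.coeFn_mk]
    rintro p ⟨a, ha, rfl⟩ ⟨b, hb, heq⟩
    exact hxy (congrArg Prod.snd heq).symm

/-- edge upper bound. With `σ(i)` (resp. `τ(j)`) the sum of the `i` (resp. `j`)
smallest values of `d̄_S` over `U_C` (resp. `V_C`), and `j i` the largest `j ≤ |V_C|` with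
`σ(i) + τ(j) ≤ k − |Ē_S|`, every `k`-defective biclique `D` between `S` and `S ∪ C` has
`|E_D|` at most the maximum over valid `i` of
`(|U_S| + i)·(|V_S| + j i) − |Ē_S| − σ(i) − τ(j i)`. -/
theorem edge_upper_bound {α β : Type*} [DecidableEq α] [DecidableEq β]
    (E : Finset (α × β)) (k : ℕ)
    (US UC : Finset α) (VS VC : Finset β)
    (hUdisj : Disjoint US UC) (hVdisj : Disjoint VS VC)
    (hES : ((US ×ˢ VS) \ E).card ≤ k)
    (j : ℕ → ℕ)
    (hj : ∀ i ≤ UC.card,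
      smallSum UC (dbarU E VS) i ≤ k - ((US ×ˢ VS) \ E).card →
      (j i ≤ VC.card ∧
       smallSum UC (dbarU E VS) i + smallSum VC (dbarV E US) (j i)
          ≤ k - ((US ×ˢ VS) \ E).card ∧
       ∀ j' ≤ VC.card,
         smallSum UC (dbarU E VS) i + smallSum VC (dbarV E US) j'
            ≤ k - ((US ×ˢ VS) \ E).card → j' ≤ j i))
    (UD : Finset α) (VD : Finset β)
    (hU1 : US ⊆ UD) (hU2 : UD ⊆ US ∪ UC) (hV1 : VS ⊆ VD) (hV2 : VD ⊆ VS ∪ VC)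
    (hdef : ((UD ×ˢ VD) \ E).card ≤ k) :
    ∃ i ≤ UC.card,
      smallSum UC (dbarU E VS) i ≤ k - ((US ×ˢ VS) \ E).card ∧
      (((UD ×ˢ VD) ∩ E).card : ℤ) ≤
        ((US.card : ℤ) + i) * ((VS.card : ℤ) + j i)
          - ((US ×ˢ VS) \ E).card
          - smallSum UC (dbarU E VS) i - smallSum VC (dbarV E US) (j i) := by
  classical
  set UX := UD ∩ UC with hUX
  set VX := VD ∩ VC with hVX
  set i := UX.card with hi
  set j' := VX.card with hj'
  set eS := ((US ×ˢ VS) \ E).card with heS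
  -- decompositions of UD and VD
  have hUDeq : UD = US ∪ UX := by
    ext x
    simp only [hUX, Finset.mem_union, Finset.mem_inter]
    constructor
    · intro hx
      rcases Finset.mem_union.mp (hU2 hx) with h | h
      · exact Or.inl h
      · exact Or.inr ⟨hx, h⟩
    · rintro (h | ⟨h, _⟩)
      · exact hU1 h
      · exact h
  have hVDeq : VD = VS ∪ VX := by
    ext x
    simp only [hVX, Finset.mem_union, Finset.mem_inter]
    constructor
    · intro hx
      rcases Finset.mem_union.mp (hV2 hx) with h | h
      · exact Or.inl h
      · exact Or.inr ⟨hx, h⟩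
    · rintro (h | ⟨h, _⟩)
      · exact hV1 h
      · exact h
  have hUdisj' : Disjoint US UX := hUdisj.mono_right Finset.inter_subset_right
  have hVdisj' : Disjoint VS VX := hVdisj.mono_right Finset.inter_subset_right
  have hUDcard : UD.card = US.card + i := by
    rw [hUDeq, Finset.card_union_of_disjoint hUdisj']
  have hVDcard : VD.card = VS.card + j' := by
    rw [hVDeq, Finset.card_union_of_disjoint hVdisj']
  -- the three disjoint families of non-edges inside the non-edges of D
  set A1 := (US ×ˢ VS) \ E with hA1
  set A2 := (UX ×ˢ VS) \ E with hA2
  set A3 := (US ×ˢ VX) \ E with hA3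
  have hsubD : A1 ∪ A2 ∪ A3 ⊆ (UD ×ˢ VD) \ E := by
    intro p hp
    have hUXsub : UX ⊆ UD := Finset.inter_subset_left
    have hVXsub : VX ⊆ VD := Finset.inter_subset_left
    simp only [hA1, hA2, hA3, Finset.mem_union, Finset.mem_sdiff, Finset.mem_product] at hp ⊢
    rcases hp with (⟨⟨h1, h2⟩, h3⟩ | ⟨⟨h1, h2⟩, h3⟩) | ⟨⟨h1, h2⟩, h3⟩
    · exact ⟨⟨hU1 h1, hV1 h2⟩, h3⟩
    · exact ⟨⟨hUXsub h1, hV1 h2⟩, h3⟩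
    · exact ⟨⟨hU1 h1, hVXsub h2⟩, h3⟩
  have hd12 : Disjoint A1 A2 := by
    simp only [hA1, hA2, Finset.disjoint_left, Finset.mem_sdiff, Finset.mem_product]
    rintro ⟨u, v⟩ ⟨⟨h1, h2⟩, h3⟩ ⟨⟨h4, h5⟩, h6⟩
    exact Finset.disjoint_left.mp hUdisj' h1 h4
  have hd13 : Disjoint (A1 ∪ A2) A3 := by
    simp only [hA1, hA2, hA3, Finset.disjoint_left, Finset.mem_union, Finset.mem_sdiff,
      Finset.mem_product]
    rintro ⟨u, v⟩ (⟨⟨h1, h2⟩, h3⟩ | ⟨⟨h1, h2⟩, h3⟩) ⟨⟨h4, h5⟩, h6⟩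
    · exact Finset.disjoint_left.mp hVdisj' h2 h5
    · exact Finset.disjoint_left.mp hVdisj' h2 h5
  have hcards : A1.card + A2.card + A3.card ≤ ((UD ×ˢ VD) \ E).card := by
    calc A1.card + A2.card + A3.card
        = (A1 ∪ A2).card + A3.card := by rw [Finset.card_union_of_disjoint hd12]
      _ = (A1 ∪ A2 ∪ A3).card := by rw [Finset.card_union_of_disjoint hd13]
      _ ≤ _ := Finset.card_le_card hsubD
  -- fiberwise counts
  have hA2card : A2.card = ∑ w ∈ UX, dbarU E VS w := card_prod_sdiff_fst E UX VS
  have hA3card : A3.card = ∑ v ∈ VX, dbarV E US v := card_prod_sdiff_snd E US VX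
  -- smallSum bounds
  have hUXC : UX ⊆ UC := Finset.inter_subset_right
  have hVXC : VX ⊆ VC := Finset.inter_subset_right
  have hsig : smallSum UC (dbarU E VS) i ≤ A2.card := by
    rw [hA2card]; exact smallSum_le_sum UC UX (dbarU E VS) hUXC
  have htau : smallSum VC (dbarV E US) j' ≤ A3.card := by
    rw [hA3card]; exact smallSum_le_sum VC VX (dbarV E US) hVXC
  have hiUC : i ≤ UC.card := Finset.card_le_card hUXC
  have hj'VC : j' ≤ VC.card := Finset.card_le_card hVXC
  have hkey : eS + smallSum UC (dbarU E VS) i + smallSum VC (dbarV E US) j' ≤ k := by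
    have := hcards
    omega
  have hsigk : smallSum UC (dbarU E VS) i ≤ k - eS := by omega
  obtain ⟨hjVC, hjsum, hjmax⟩ := hj i hiUC hsigk
  have hj'le : j' ≤ j i := hjmax j' hj'VC (by omega)
  -- bound on |E_D|
  have hcardED : ((UD ×ˢ VD) ∩ E).card + ((UD ×ˢ VD) \ E).card = UD.card * VD.card := by
    rw [Finset.card_inter_add_card_sdiff, Finset.card_product]
  -- tau growth bound
  have hdbarVle : ∀ x ∈ VC, dbarV E US x ≤ US.card := fun x _ => Finset.card_filter_le _ _
  have htaugrow : smallSum VC (dbarV E US) (j i)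
      ≤ smallSum VC (dbarV E US) j' + (j i - j') * US.card :=
    smallSum_le_add VC (dbarV E US) US.card j' (j i) hj'le hdbarVle
  refine ⟨i, hiUC, hsigk, ?_⟩
  -- now pure integer arithmetic
  set σ := smallSum UC (dbarU E VS) i
  set τ' := smallSum VC (dbarV E US) j'
  set τ := smallSum VC (dbarV E US) (j i)
  have hEDle : (((UD ×ˢ VD) ∩ E).card : ℤ)
      ≤ ((US.card : ℤ) + i) * ((VS.card : ℤ) + j') - eS - σ - τ' := by
    have h1 : (((UD ×ˢ VD) ∩ E).card : ℤ)
        = ((US.card : ℤ) + i) * ((VS.card : ℤ) + j') - ((UD ×ˢ VD) \ E).card := by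
      have := hcardED
      have h2 : ((UD.card : ℤ)) * VD.card = ((US.card : ℤ) + i) * ((VS.card : ℤ) + j') := by
        rw [hUDcard, hVDcard]; push_cast; ring
      push_cast at this ⊢
      linarith [h2, this]
    rw [h1]
    have h4 : eS + σ + τ' ≤ ((UD ×ˢ VD) \ E).card := by
      have h3 := hcards
      have h5 := hsig
      have h6 := htau
      omega
    have h4' : (eS : ℤ) + σ + τ' ≤ ((UD ×ˢ VD) \ E).card := by exact_mod_cast h4
    linarith
  have hfinal : ((US.card : ℤ) + i) * ((VS.card : ℤ) + j') - τ'
      ≤ ((US.card : ℤ) + i) * ((VS.card : ℤ) + j i) - τ := by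
    have hτ : (τ : ℤ) ≤ τ' + ((j i : ℤ) - j') * US.card := by
      have h7 := htaugrow
      zify [hj'le] at h7
      linarith
    have hji : (j' : ℤ) ≤ j i := by exact_mod_cast hj'le
    have e2 : ((US.card : ℤ)) * ((j i : ℤ) - j')
        ≤ ((US.card : ℤ) + i) * ((j i : ℤ) - j') := by
      apply mul_le_mul_of_nonneg_right
      · have : (0:ℤ) ≤ (i:ℤ) := Nat.cast_nonneg i
        linarith
      · linarith
    have e1 : ((US.card : ℤ) + i) * ((VS.card : ℤ) + j i)
        - ((US.card : ℤ) + i) * ((VS.card : ℤ) + j')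
        = ((US.card : ℤ) + i) * ((j i : ℤ) - j') := by ring
    linarith
  linarith
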